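/- If X is a normal n×n complex matrix and [[A, X],[X*, B]] is positive semidefinite, then the Frobenius norm inequality ‖[[A, X],[X*, B]]‖₂ ≤ ‖A + B‖₂ holds. -/

import Mathlib

open scoped Matrix ComplexOrder

noncomputable section

/-- The numerical range of a matrix. -/
def numRange {m : Type*} [Fintype m] (X : Matrix m m ℂ) : Set ℂ :=
  {z | ∃ v : m → ℂ, star v ⬝ᵥ v = 1 ∧ z = star v ⬝ᵥ X.mulVec v}

/-- The inradius of a subset of the plane: the radius of the largest disc it contains. -/
def inRad (S : Set ℂ) : ℝ := sSup {r : ℝ | ∃ c : ℂ, Metric.closedBall c r ⊆ S}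

/-- The indiameter: the diameter of the largest disc contained in the set. -/
def inDiam (S : Set ℂ) : ℝ := 2 * inRad S

/-- The numerical range of the compression of `X` to the subspace `S`. -/
def nrOn {m : Type*} [Fintype m] (X : Matrix m m ℂ) (S : Submodule ℂ (m → ℂ)) : Set ℂ :=
  {z | ∃ v ∈ S, star v ⬝ᵥ v = 1 ∧ z = star v ⬝ᵥ X.mulVec v}

/-- The elliptical width `δ₂(X)`: the supremum of the indiameters of the numerical
ranges of compressions of `X` to two-dimensional subspaces. -/
def ellWidth {m : Type*} [Fintype m] (X : Matrix m m ℂ) : ℝ :=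
  sSup {d | ∃ S : Submodule ℂ (m → ℂ), Module.finrank ℂ S = 2 ∧ d = inDiam (nrOn X S)}

/-- The operator (spectral) norm of a matrix. -/
def opNorm {m : Type*} [Fintype m] [DecidableEq m] (M : Matrix m m ℂ) : ℝ :=
  ‖Matrix.toEuclideanCLM (𝕜 := ℂ) M‖

/-- The Frobenius (Hilbert–Schmidt) norm of a matrix. -/
def frobNorm {m : Type*} [Fintype m] (M : Matrix m m ℂ) : ℝ :=
  Real.sqrt ((Matrix.trace (Mᴴ * M)).re)

/-- Eigenvalues of a Hermitian matrix in decreasing order (junk value `0` otherwise):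
`eigDesc M k` is the `(k+1)`-th largest eigenvalue of `M`. -/
def eigDesc {m : ℕ} (M : Matrix (Fin m) (Fin m) ℂ) (k : Fin m) : ℝ :=
  if h : M.IsHermitian then (h.eigenvalues ∘ Tuple.sort h.eigenvalues) k.rev else 0

/-- The absolute value `|X| = (XᴴX)^(1/2)` of a matrix. -/
def matAbs {m : Type*} [Fintype m] [DecidableEq m] (X : Matrix m m ℂ) : Matrix m m ℂ :=
  (Matrix.posSemidef_conjTranspose_mul_self X).1.eigenvectorUnitary.1 *
    Matrix.diagonal ((↑) ∘ (√·) ∘ (Matrix.posSemidef_conjTranspose_mul_self X).1.eigenvalues) *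
    (star (Matrix.posSemidef_conjTranspose_mul_self X).1.eigenvectorUnitary : Matrix m m ℂ)

/-- The `2n × 2n` block matrix `[[A, X],[Xᴴ, B]]`, reindexed by `Fin (n+n)`. -/
def blockR {n : ℕ} (A X B : Matrix (Fin n) (Fin n) ℂ) :
    Matrix (Fin (n + n)) (Fin (n + n)) ℂ :=
  (Matrix.fromBlocks A X Xᴴ B).submatrix finSumFinEquiv.symm finSumFinEquiv.symm

/-- The operator norm distance from `X` to the scalar matrices. -/
def distScalar {m : Type*} [Fintype m] [DecidableEq m] (X : Matrix m m ℂ) : ℝ :=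
  ⨅ a : ℂ, opNorm (X - a • 1)

/-- Apply a real function to a Hermitian matrix by the functional calculus
(junk value `0` if the matrix is not Hermitian). -/
def hermApply {m : Type*} [Fintype m] [DecidableEq m] (f : ℝ → ℝ) (M : Matrix m m ℂ) :
    Matrix m m ℂ :=
  if h : M.IsHermitian then h.cfc f else 0

end

section AuxProofs
open Matrix Finset


open Matrix Finset

private lemma aux_scalar {ι : Type*} [Fintype ι] (b : ι → ℝ) (hb : ∀ i, 0 < b i)
    (c : ι → ι → ℝ) (hc : ∀ i j, 0 ≤ c i j)
    (hrc : ∀ j, ∑ k, c j k = ∑ k, c k j) :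
    ∑ j, ∑ k, c j k ≤ ∑ j, ∑ k, (b j / b k) * c j k := by
  have e1 : ∑ j, ∑ k, Real.log (b j) * c j k = ∑ j, ∑ k, Real.log (b k) * c j k := by
    calc ∑ j, ∑ k, Real.log (b j) * c j k
        = ∑ j, Real.log (b j) * ∑ k, c j k := by simp [Finset.mul_sum]
      _ = ∑ j, Real.log (b j) * ∑ k, c k j := by simp_rw [hrc]
      _ = ∑ j, ∑ k, Real.log (b j) * c k j := by simp [Finset.mul_sum]
      _ = ∑ j, ∑ k, Real.log (b k) * c j k := Finset.sum_comm
  have h2 : ∑ j, ∑ k, (1 + (Real.log (b j) - Real.log (b k))) * c j k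
      ≤ ∑ j, ∑ k, (b j / b k) * c j k := by
    refine Finset.sum_le_sum fun j _ => Finset.sum_le_sum fun k _ => ?_
    have h1 : Real.log (b j / b k) ≤ b j / b k - 1 :=
      Real.log_le_sub_one_of_pos (div_pos (hb j) (hb k))
    rw [Real.log_div (hb j).ne' (hb k).ne'] at h1
    nlinarith [hc j k]
  refine le_trans (le_of_eq ?_) h2
  have expand : ∀ j k : ι, (1 + (Real.log (b j) - Real.log (b k))) * c j k
      = c j k + (Real.log (b j) * c j k - Real.log (b k) * c j k) := by intros; ring
  simp_rw [expand, Finset.sum_add_distrib, Finset.sum_sub_distrib, e1]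
  ring

private lemma diag_re_nonneg {m : Type*} [Fintype m] [DecidableEq m] {T : Matrix m m ℂ}
    (hT : T.PosSemidef) (j : m) : 0 ≤ (T j j).re := by
  have h := hT.re_dotProduct_nonneg (Pi.single j 1)
  simpa [dotProduct, Matrix.mulVec, Pi.single_apply] using h

private lemma trace_re_nonneg {m : Type*} [Fintype m] [DecidableEq m] {T : Matrix m m ℂ}
    (hT : T.PosSemidef) : 0 ≤ T.trace.re := by
  rw [Matrix.trace, Complex.re_sum]
  exact Finset.sum_nonneg fun j _ => diag_re_nonneg hT j

private lemma psd_trace_diag {m : Type*} [Fintype m] [DecidableEq m] {T : Matrix m m ℂ}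
    (hT : T.PosSemidef) (d : m → ℝ) (hd : ∀ i, 0 ≤ d i) :
    0 ≤ (Matrix.trace (T * Matrix.diagonal (fun i => (d i : ℂ)))).re := by
  rw [Matrix.trace, Complex.re_sum]
  refine Finset.sum_nonneg fun j _ => ?_
  rw [Matrix.diag_apply, Matrix.mul_diagonal, mul_comm, Complex.re_ofReal_mul]
  exact mul_nonneg (hd j) (diag_re_nonneg hT j)

private lemma my_trace_fromBlocks {l m : Type*} [Fintype l] [Fintype m]
    (A : Matrix l l ℂ) (B : Matrix l m ℂ) (C : Matrix m l ℂ) (D : Matrix m m ℂ) :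
    (Matrix.fromBlocks A B C D).trace = A.trace + D.trace := by
  simp [Matrix.trace, Fintype.sum_sum_type, Matrix.diag]




open Matrix Finset

private lemma key_eps {n : ℕ} {A B X : Matrix (Fin n) (Fin n) ℂ}
    (hP : (Matrix.fromBlocks A X Xᴴ B).PosSemidef)
    (hX : X * Xᴴ = Xᴴ * X) (ε : ℝ) (hε : 0 < ε) :
    (Matrix.trace (X * Xᴴ)).re ≤
      (Matrix.trace ((A + (ε:ℂ) • 1) * (B + (ε:ℂ) • 1))).re := by
  set Aε : Matrix (Fin n) (Fin n) ℂ := A + (ε:ℂ) • 1 with hAεdef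
  set Bε : Matrix (Fin n) (Fin n) ℂ := B + (ε:ℂ) • 1 with hBεdef
  have hB : B.PosSemidef := by
    have h := hP.submatrix (Sum.inr : Fin n → Fin n ⊕ Fin n)
    have e : (Matrix.fromBlocks A X Xᴴ B).submatrix (Sum.inr : Fin n → _) Sum.inr = B := by
      ext i j; rfl
    rwa [e] at h
  have hsm : ((ε:ℂ) • (1 : Matrix (Fin n) (Fin n) ℂ)).PosDef := by
    rw [Matrix.smul_one_eq_diagonal]
    exact Matrix.PosDef.diagonal (fun i => Complex.zero_lt_real.mpr hε)
  have hsm2 : ((ε:ℂ) • (1 : Matrix (Fin n ⊕ Fin n) (Fin n ⊕ Fin n) ℂ)).PosDef := by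
    rw [Matrix.smul_one_eq_diagonal]
    exact Matrix.PosDef.diagonal (fun i => Complex.zero_lt_real.mpr hε)
  have hBε : Bε.PosDef := Matrix.PosDef.posSemidef_add hB hsm
  have hMε : (Matrix.fromBlocks Aε X Xᴴ Bε).PosSemidef := by
    have e : Matrix.fromBlocks Aε X Xᴴ Bε
        = Matrix.fromBlocks A X Xᴴ B + (ε:ℂ) • (1 : Matrix (Fin n ⊕ Fin n) _ ℂ) := by
      rw [← Matrix.fromBlocks_one, Matrix.fromBlocks_smul]
      ext (i | i) (j | j) <;>
        simp [hAεdef, hBεdef]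
    rw [e]; exact hP.add hsm2.posSemidef
  haveI : Invertible Bε := hBε.isUnit.invertible
  have hSchur : (Aε - X * Bε⁻¹ * Xᴴ).PosSemidef :=
    (Matrix.PosDef.fromBlocks₂₂ Aε X hBε).mp hMε
  -- spectral decomposition of Bε
  set U : Matrix (Fin n) (Fin n) ℂ := (hBε.1.eigenvectorUnitary : Matrix (Fin n) (Fin n) ℂ)
    with hUdef
  set d : Fin n → ℝ := hBε.1.eigenvalues with hddef
  have hd : ∀ i, 0 < d i := hBε.eigenvalues_pos
  have hU1 : U * Uᴴ = 1 := by
    have h := (Matrix.mem_unitaryGroup_iff).mp hBε.1.eigenvectorUnitary.2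
    simpa [Matrix.star_eq_conjTranspose] using h
  have hU2 : Uᴴ * U = 1 := by
    have h := (Matrix.mem_unitaryGroup_iff').mp hBε.1.eigenvectorUnitary.2
    simpa [Matrix.star_eq_conjTranspose] using h
  have cancel : ∀ M : Matrix (Fin n) (Fin n) ℂ, U * (Uᴴ * M) = M := fun M => by
    rw [← Matrix.mul_assoc, hU1, Matrix.one_mul]
  set D : Matrix (Fin n) (Fin n) ℂ := Matrix.diagonal (fun i => (d i : ℂ)) with hDdef
  set D' : Matrix (Fin n) (Fin n) ℂ := Matrix.diagonal (fun i => ((d i)⁻¹ : ℂ)) with hD'def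
  have hDiag : Uᴴ * Bε * U = D := by
    have h := hBε.1.conjStarAlgAut_star_eigenvectorUnitary
    simpa [Unitary.conjStarAlgAut_apply, Unitary.coe_star, Matrix.star_eq_conjTranspose,
      Function.comp_def, hDdef] using h
  have hDD' : D * D' = 1 := by
    rw [hDdef, hD'def, Matrix.diagonal_mul_diagonal]
    have : (fun i => (d i : ℂ) * ((d i)⁻¹ : ℂ)) = fun _ => (1:ℂ) := by
      funext i
      exact mul_inv_cancel₀ (by exact_mod_cast (hd i).ne')
    rw [this, Matrix.diagonal_one]
  have hD'D : D' * D = 1 := by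
    rw [hDdef, hD'def, Matrix.diagonal_mul_diagonal]
    have : (fun i => ((d i)⁻¹ : ℂ) * (d i : ℂ)) = fun _ => (1:ℂ) := by
      funext i
      exact inv_mul_cancel₀ (by exact_mod_cast (hd i).ne')
    rw [this, Matrix.diagonal_one]
  have hBinv : Uᴴ * Bε⁻¹ * U = D' := by
    have hBB : Bε * Bε⁻¹ = 1 := Matrix.mul_inv_of_invertible Bε
    have h1 : D * (Uᴴ * Bε⁻¹ * U) = 1 := by
      calc D * (Uᴴ * Bε⁻¹ * U) = (Uᴴ * Bε * U) * (Uᴴ * Bε⁻¹ * U) := by rw [hDiag]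
        _ = Uᴴ * (Bε * (Bε⁻¹ * U)) := by simp only [Matrix.mul_assoc, cancel]
        _ = 1 := by rw [← Matrix.mul_assoc Bε, hBB, Matrix.one_mul, hU2]
    calc Uᴴ * Bε⁻¹ * U = (D' * D) * (Uᴴ * Bε⁻¹ * U) := by rw [hD'D, Matrix.one_mul]
      _ = D' * (D * (Uᴴ * Bε⁻¹ * U)) := by rw [Matrix.mul_assoc]
      _ = D' := by rw [h1, Matrix.mul_one]
  set Y : Matrix (Fin n) (Fin n) ℂ := Uᴴ * X * U with hYdef
  set A' : Matrix (Fin n) (Fin n) ℂ := Uᴴ * Aε * U with hA'def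
  have hYt : Yᴴ = Uᴴ * Xᴴ * U := by
    rw [hYdef]
    simp [Matrix.conjTranspose_mul, Matrix.mul_assoc]
  have hT : (A' - Y * D' * Yᴴ).PosSemidef := by
    have h := hSchur.conjTranspose_mul_mul_same U
    have e : Uᴴ * (Aε - X * Bε⁻¹ * Xᴴ) * U = A' - Y * D' * Yᴴ := by
      rw [hYt, ← hBinv, hA'def, hYdef]
      simp only [Matrix.sub_mul, Matrix.mul_sub, Matrix.mul_assoc, cancel]
    rwa [e] at h
  -- traces
  have tr1 : (Matrix.trace ((Y * D' * Yᴴ) * D)).re ≤ (Matrix.trace (A' * D)).re := by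
    have h0 := psd_trace_diag hT d (fun i => (hd i).le)
    rw [← hDdef] at h0
    rw [Matrix.sub_mul, Matrix.trace_sub, Complex.sub_re] at h0
    linarith
  have tr2 : Matrix.trace (A' * D) = Matrix.trace (Aε * Bε) := by
    rw [← hDiag, hA'def]
    have e : (Uᴴ * Aε * U) * (Uᴴ * Bε * U) = Uᴴ * (Aε * Bε) * U := by
      simp only [Matrix.mul_assoc, cancel]
    rw [e, Matrix.trace_mul_cycle, ← Matrix.mul_assoc, hU1, Matrix.one_mul]
  have tr3 : Matrix.trace (Y * Yᴴ) = Matrix.trace (X * Xᴴ) := by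
    rw [hYt, hYdef]
    have e : (Uᴴ * X * U) * (Uᴴ * Xᴴ * U) = Uᴴ * (X * Xᴴ) * U := by
      simp only [Matrix.mul_assoc, cancel]
    rw [e, Matrix.trace_mul_cycle, ← Matrix.mul_assoc, hU1, Matrix.one_mul]
  have hYnorm : Y * Yᴴ = Yᴴ * Y := by
    rw [hYt, hYdef]
    have e1 : (Uᴴ * X * U) * (Uᴴ * Xᴴ * U) = Uᴴ * (X * Xᴴ) * U := by
      simp only [Matrix.mul_assoc, cancel]
    have e2 : (Uᴴ * Xᴴ * U) * (Uᴴ * X * U) = Uᴴ * (Xᴴ * X) * U := by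
      simp only [Matrix.mul_assoc, cancel]
    rw [e1, e2, hX]
  have hrc : ∀ j, ∑ k, Complex.normSq (Y j k) = ∑ k, Complex.normSq (Y k j) := by
    intro j
    have h : ∑ k, Y j k * (starRingEnd ℂ) (Y j k) = ∑ k, (starRingEnd ℂ) (Y k j) * Y k j := by
      have h := congrFun (congrFun hYnorm j) j
      simpa [Matrix.mul_apply, Matrix.conjTranspose_apply] using h
    calc ∑ k, Complex.normSq (Y j k)
        = (∑ k, Y j k * (starRingEnd ℂ) (Y j k)).re := by
          rw [Complex.re_sum]
          exact (Finset.sum_congr rfl fun k _ => by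
            rw [Complex.mul_conj, Complex.ofReal_re]).symm
      _ = (∑ k, (starRingEnd ℂ) (Y k j) * Y k j).re := by rw [h]
      _ = ∑ k, Complex.normSq (Y k j) := by
          rw [Complex.re_sum]
          exact Finset.sum_congr rfl fun k _ => by
            rw [mul_comm, Complex.mul_conj, Complex.ofReal_re]
  have tr4 : (Matrix.trace (Y * D' * Yᴴ * D)).re
      = ∑ j, ∑ k, (d j / d k) * Complex.normSq (Y j k) := by
    have e1 : ∀ j, (Y * D' * Yᴴ * D) j j
        = (∑ k, Y j k * ((d k)⁻¹ : ℂ) * (starRingEnd ℂ) (Y j k)) * (d j : ℂ) := by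
      intro j
      rw [Matrix.mul_diagonal]
      congr 1
      rw [Matrix.mul_apply]
      refine Finset.sum_congr rfl fun k _ => ?_
      rw [Matrix.mul_diagonal, Matrix.conjTranspose_apply]
      rfl
    rw [Matrix.trace, Complex.re_sum]
    refine Finset.sum_congr rfl fun j _ => ?_
    rw [Matrix.diag_apply, e1, Finset.sum_mul, Complex.re_sum]
    refine Finset.sum_congr rfl fun k _ => ?_
    have : Y j k * ((d k)⁻¹ : ℂ) * (starRingEnd ℂ) (Y j k) * (d j : ℂ)
        = ((((d j) * (d k)⁻¹ : ℝ)) : ℂ) * (Y j k * (starRingEnd ℂ) (Y j k)) := by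
      push_cast
      ring
    rw [this, Complex.mul_conj, Complex.re_ofReal_mul, Complex.ofReal_re]
    rw [div_eq_mul_inv]
  have tr5 : (Matrix.trace (X * Xᴴ)).re = ∑ j, ∑ k, Complex.normSq (Y j k) := by
    rw [← tr3, Matrix.trace, Complex.re_sum]
    refine Finset.sum_congr rfl fun j _ => ?_
    rw [Matrix.diag_apply, Matrix.mul_apply, Complex.re_sum]
    refine Finset.sum_congr rfl fun k _ => ?_
    rw [Matrix.conjTranspose_apply]
    rw [show star (Y j k) = (starRingEnd ℂ) (Y j k) from rfl, Complex.mul_conj,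
      Complex.ofReal_re]
  have hkey := aux_scalar d hd (fun j k => Complex.normSq (Y j k))
    (fun _ _ => Complex.normSq_nonneg _) hrc
  rw [tr5]
  calc ∑ j, ∑ k, Complex.normSq (Y j k)
      ≤ ∑ j, ∑ k, (d j / d k) * Complex.normSq (Y j k) := hkey
    _ = (Matrix.trace (Y * D' * Yᴴ * D)).re := tr4.symm
    _ ≤ (Matrix.trace (A' * D)).re := tr1
    _ = (Matrix.trace (Aε * Bε)).re := by rw [tr2]



private lemma key_ineq {n : ℕ} {A B X : Matrix (Fin n) (Fin n) ℂ}
    (hP : (Matrix.fromBlocks A X Xᴴ B).PosSemidef)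
    (hX : X * Xᴴ = Xᴴ * X) :
    (Matrix.trace (X * Xᴴ)).re ≤ (Matrix.trace (A * B)).re := by
  have hA : A.PosSemidef := by
    have h := hP.submatrix (Sum.inl : Fin n → Fin n ⊕ Fin n)
    have e : (Matrix.fromBlocks A X Xᴴ B).submatrix (Sum.inl : Fin n → _) Sum.inl = A := by
      ext i j; rfl
    rwa [e] at h
  have hB : B.PosSemidef := by
    have h := hP.submatrix (Sum.inr : Fin n → Fin n ⊕ Fin n)
    have e : (Matrix.fromBlocks A X Xᴴ B).submatrix (Sum.inr : Fin n → _) Sum.inr = B := by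
      ext i j; rfl
    rwa [e] at h
  have hTrA : 0 ≤ (Matrix.trace A).re := trace_re_nonneg hA
  have hTrB : 0 ≤ (Matrix.trace B).re := trace_re_nonneg hB
  have expand : ∀ ε : ℝ, (Matrix.trace ((A + (ε:ℂ) • 1) * (B + (ε:ℂ) • 1))).re
      = (Matrix.trace (A * B)).re + ε * (Matrix.trace B).re + ε * (Matrix.trace A).re
        + ε * ε * n := by
    intro ε
    have e : (A + (ε:ℂ) • 1) * (B + (ε:ℂ) • 1)
        = A * B + (ε:ℂ) • B + ((ε:ℂ) • A + ((ε:ℂ) * (ε:ℂ)) • (1 : Matrix (Fin n) (Fin n) ℂ)) := by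
      simp only [Matrix.add_mul, Matrix.mul_add, smul_mul_assoc, mul_smul_comm, smul_smul,
        smul_add, Matrix.mul_one, Matrix.one_mul]

    rw [e, Matrix.trace_add, Matrix.trace_add, Matrix.trace_add, Matrix.trace_smul,
      Matrix.trace_smul, Matrix.trace_smul, Matrix.trace_one]
    simp only [Complex.add_re, smul_eq_mul, Complex.re_ofReal_mul, Fintype.card_fin]
    have : (((ε:ℂ) * (ε:ℂ)) * ((n : ℕ) : ℂ)).re = ε * ε * n := by
      norm_cast
    rw [this]
    ring
  refine le_of_forall_pos_le_add fun δ hδ => ?_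
  set K : ℝ := (Matrix.trace A).re + (Matrix.trace B).re + n with hKdef
  have hK : 0 ≤ K := by positivity
  have hK1 : (0:ℝ) < K + 1 := by linarith
  set ε : ℝ := min 1 (δ / (K + 1)) with hεdef
  have hε : 0 < ε := lt_min one_pos (div_pos hδ hK1)
  have hε1 : ε ≤ 1 := min_le_left _ _
  have hεK : ε * (K + 1) ≤ δ := (le_div_iff₀ hK1).mp (min_le_right _ _)
  have h := key_eps hP hX ε hε
  rw [expand ε] at h
  have hn : (0:ℝ) ≤ n := Nat.cast_nonneg n
  nlinarith [mul_nonneg hε.le hn, mul_le_mul_of_nonneg_right hε1 (mul_nonneg hε.le hn),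
    mul_nonneg hε.le hTrA, mul_nonneg hε.le hTrB]


end AuxProofs

/-- If `X` is normal and `[[A,X],[Xᴴ,B]]` is positive semidefinite, then
`‖[[A,X],[Xᴴ,B]]‖₂ ≤ ‖A + B‖₂` in the Frobenius norm. -/
theorem stmt10 {n : ℕ} (A B X : Matrix (Fin n) (Fin n) ℂ)
    (hP : (Matrix.fromBlocks A X Xᴴ B).PosSemidef)
    (hX : X * Xᴴ = Xᴴ * X) :
    frobNorm (Matrix.fromBlocks A X Xᴴ B) ≤ frobNorm (A + B) := by
  have hA : A.PosSemidef := by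
    have h := hP.submatrix (Sum.inl : Fin n → Fin n ⊕ Fin n)
    have e : (Matrix.fromBlocks A X Xᴴ B).submatrix (Sum.inl : Fin n → _) Sum.inl = A := by
      ext i j; rfl
    rwa [e] at h
  have hB : B.PosSemidef := by
    have h := hP.submatrix (Sum.inr : Fin n → Fin n ⊕ Fin n)
    have e : (Matrix.fromBlocks A X Xᴴ B).submatrix (Sum.inr : Fin n → _) Sum.inr = B := by
      ext i j; rfl
    rwa [e] at h
  have key := key_ineq hP hX
  unfold frobNorm
  apply Real.sqrt_le_sqrt
  rw [hP.1.eq, Matrix.conjTranspose_add, hA.1.eq, hB.1.eq]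
  rw [Matrix.fromBlocks_multiply, my_trace_fromBlocks]
  rw [Matrix.add_mul, Matrix.mul_add, Matrix.mul_add]
  have e1 : Matrix.trace (Xᴴ * X) = Matrix.trace (X * Xᴴ) := Matrix.trace_mul_comm _ _
  have e2 : Matrix.trace (B * A) = Matrix.trace (A * B) := Matrix.trace_mul_comm _ _
  simp only [Matrix.trace_add, Complex.add_re, e1, e2]
  linarith
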